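/- Let x be an n×n matrix with 0 ≤ x_{ij} ≤ 1 for all i,j and Σ_{i,j} x_{ij} ≤ n. Then the vector Tx = (Σ_{k=1}^n x_{k,π(k)} : π ∈ S_n) is Hardy–Littlewood majorized by T(I_n). -/

import Mathlib

open scoped Classical

noncomputable def sumLargest {ι : Type*} [Fintype ι] (v : ι → ℝ) (m : ℕ) : ℝ :=
  sSup ((fun I : Finset ι => ∑ i ∈ I, v i) '' {I | I.card = m})

def Maj {ι : Type*} [Fintype ι] (a b : ι → ℝ) : Prop :=
  ∀ m : ℕ, 1 ≤ m → m ≤ Fintype.card ι → sumLargest a m ≤ sumLargest b m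

/-- The vector `Tx = (∑ k, x_{k, π k})_{π ∈ S_n}`. -/
def T (n : ℕ) (x : Fin n → Fin n → ℝ) : Equiv.Perm (Fin n) → ℝ :=
  fun π => ∑ k, x k (π k)

namespace L4
open Finset
variable {n : ℕ}

def hits (C : Finset (Fin n × Fin n)) (π : Equiv.Perm (Fin n)) : ℕ :=
  ∑ e ∈ C, if π e.1 = e.2 then 1 else 0
def fixc (σ : Equiv.Perm (Fin n)) : ℕ := ∑ i, if σ i = i then 1 else 0
def Phi (C : Finset (Fin n × Fin n)) (s : ℕ) : ℕ :=
  ∑ π : Equiv.Perm (Fin n), min (hits C π) s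
def Dlow (n s : ℕ) : ℕ := ∑ σ : Equiv.Perm (Fin n), min (fixc σ) s
def rc (C : Finset (Fin n × Fin n)) (i : Fin n) : ℕ := (C.filter fun e => e.1 = i).card
def cc (C : Finset (Fin n × Fin n)) (j : Fin n) : ℕ := (C.filter fun e => e.2 = j).card
def mu (C : Finset (Fin n × Fin n)) : ℕ := (∑ i, (rc C i - 1)) + (∑ j, (cc C j - 1))

lemma row_part_eq (C : Finset (Fin n × Fin n)) (i : Fin n) (v : Fin n) (ρ : Equiv.Perm (Fin n))
    (hv : ρ i = v) :
    (∑ e ∈ C.filter fun e => e.1 = i, if ρ e.1 = e.2 then 1 else 0)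
      = if (i, v) ∈ C then 1 else 0 := by
  have : ∀ e ∈ C.filter fun e => e.1 = i, (if ρ e.1 = e.2 then (1:ℕ) else 0) = if e = (i, v) then 1 else 0 := by
    rintro ⟨e1, e2⟩ he
    simp only [Finset.mem_filter] at he
    obtain ⟨-, rfl⟩ : _ ∧ e1 = i := he
    by_cases h : e2 = v <;> simp [h, hv, Prod.ext_iff, eq_comm]
  rw [Finset.sum_congr rfl this, Finset.sum_ite_eq' _ (i,v) (fun _ => 1)]
  simp [Finset.mem_filter]

lemma exchange_row (s : ℕ) (C : Finset (Fin n × Fin n)) (i i' b : Fin n)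
    (hib : (i, b) ∈ C) (hii' : i ≠ i') (hrow : ∀ y, (i', y) ∉ C) :
    Phi (insert (i', b) (C.erase (i, b))) s ≤ Phi C s := by
  set τ : Equiv.Perm (Fin n) := Equiv.swap i i' with hτ
  set E := C.erase (i, b) with hE
  set C' := insert (i', b) E with hC'
  have hibE : (i, b) ∉ E := Finset.notMem_erase _ _
  have hi'bE : (i', b) ∉ E := fun h => hrow b (Finset.mem_of_mem_erase h)
  have hCi : ∀ ρ : Equiv.Perm (Fin n), hits C ρ = (if ρ i = b then 1 else 0) + hits E ρ := by
    intro ρ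
    have : C = insert (i, b) E := (Finset.insert_erase hib).symm
    rw [hits, this, Finset.sum_insert hibE]; rfl
  have hC'i : ∀ ρ : Equiv.Perm (Fin n), hits C' ρ = (if ρ i' = b then 1 else 0) + hits E ρ := by
    intro ρ
    rw [hits, hC', Finset.sum_insert hi'bE]; rfl
  -- decomposition of hits E for π and π * τ
  have key : ∀ π : Equiv.Perm (Fin n),
      min (hits C' π) s + min (hits C' (π * τ)) s
        ≤ min (hits C π) s + min (hits C (π * τ)) s := by
    intro π
    have hτi : (π * τ) i = π i' := by simp [hτ, Equiv.swap_apply_left]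
    have hτi' : (π * τ) i' = π i := by simp [hτ, Equiv.swap_apply_right]
    set w : ℕ := ∑ e ∈ E.filter fun e => ¬ e.1 = i, if π e.1 = e.2 then 1 else 0 with hw
    set u : ℕ := if (i, π i) ∈ E then 1 else 0 with hu
    set u' : ℕ := if (i, π i') ∈ E then 1 else 0 with hu'
    have hwsame : (∑ e ∈ E.filter fun e => ¬ e.1 = i, if (π * τ) e.1 = e.2 then 1 else 0) = w := by
      apply Finset.sum_congr rfl
      rintro ⟨e1, e2⟩ he
      simp only [Finset.mem_filter] at he
      have h1 : e1 ≠ i := he.2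
      have h2 : e1 ≠ i' := by
        rintro rfl; exact hrow e2 (Finset.mem_of_mem_erase he.1)
      have : (π * τ) e1 = π e1 := by
        simp [hτ, Equiv.swap_apply_of_ne_of_ne h1 h2]
      rw [this]
    have hEπ : hits E π = u + w := by
      rw [hits, ← Finset.sum_filter_add_sum_filter_not E (fun e => e.1 = i)]
      rw [row_part_eq E i (π i) π rfl]
    have hEπτ : hits E (π * τ) = u' + w := by
      rw [hits, ← Finset.sum_filter_add_sum_filter_not E (fun e => e.1 = i)]
      rw [row_part_eq E i (π i') (π * τ) hτi, hwsame]
    have hua : u + (if π i = b then 1 else 0) ≤ 1 := by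
      by_cases h : π i = b
      · have : u = 0 := by rw [hu]; rw [h]; simp [hibE]
        simp [this, h]
      · simp only [h, if_false, add_zero, hu]
        split <;> omega
    have hua' : u' + (if π i' = b then 1 else 0) ≤ 1 := by
      by_cases h : π i' = b
      · have : u' = 0 := by rw [hu']; rw [h]; simp [hibE]
        simp [this, h]
      · simp only [h, if_false, add_zero, hu']
        split <;> omega
    rw [hCi, hCi, hC'i, hC'i, hEπ, hEπτ, hτi, hτi']
    omega
  have reidx : ∀ X : Finset (Fin n × Fin n),
      ∑ π : Equiv.Perm (Fin n), min (hits X (π * τ)) s = Phi X s :=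
    fun X => Fintype.sum_equiv (Equiv.mulRight τ) _ _ (fun π => rfl)
  have h2 : Phi C' s + Phi C' s ≤ Phi C s + Phi C s := by
    calc Phi C' s + Phi C' s
        = ∑ π : Equiv.Perm (Fin n), (min (hits C' π) s + min (hits C' (π * τ)) s) := by
          rw [Finset.sum_add_distrib, reidx]; rfl
      _ ≤ ∑ π : Equiv.Perm (Fin n), (min (hits C π) s + min (hits C (π * τ)) s) :=
          Finset.sum_le_sum (fun π _ => key π)
      _ = Phi C s + Phi C s := by rw [Finset.sum_add_distrib, reidx]; rfl
  omega

lemma col_part_eq (C : Finset (Fin n × Fin n)) (j : Fin n) (v : Fin n) (π : Equiv.Perm (Fin n)) :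
    (∑ e ∈ C.filter fun e => e.2 = j, if π e.1 = v then 1 else 0)
      = if (π⁻¹ v, j) ∈ C then 1 else 0 := by
  have : ∀ e ∈ C.filter fun e => e.2 = j, (if π e.1 = v then (1:ℕ) else 0) = if e = (π⁻¹ v, j) then 1 else 0 := by
    rintro ⟨e1, e2⟩ he
    simp only [Finset.mem_filter] at he
    obtain ⟨-, rfl⟩ : _ ∧ e2 = j := he
    by_cases h : e1 = π⁻¹ v
    · simp [h, Prod.ext_iff, Equiv.Perm.inv_def, Equiv.apply_symm_apply]
    · have : π e1 ≠ v := by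
        intro hh; exact h (by rw [← hh]; simp)
      rw [if_neg this, if_neg (fun hh => h (Prod.ext_iff.mp hh).1)]
  rw [Finset.sum_congr rfl this, Finset.sum_ite_eq' _ (π⁻¹ v, j) (fun _ => 1)]
  simp [Finset.mem_filter]

lemma exchange_col (s : ℕ) (C : Finset (Fin n × Fin n)) (k j j' : Fin n)
    (hkj : (k, j) ∈ C) (hjj' : j ≠ j') (hcol : ∀ y, (y, j') ∉ C) :
    Phi (insert (k, j') (C.erase (k, j))) s ≤ Phi C s := by
  set τ : Equiv.Perm (Fin n) := Equiv.swap j j' with hτ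
  set E := C.erase (k, j) with hE
  set C' := insert (k, j') E with hC'
  have hkjE : (k, j) ∉ E := Finset.notMem_erase _ _
  have hkj'E : (k, j') ∉ E := fun h => hcol k (Finset.mem_of_mem_erase h)
  -- rewrite hits of τ * π
  have htw : ∀ (X : Finset (Fin n × Fin n)) (π : Equiv.Perm (Fin n)),
      hits X (τ * π) = ∑ e ∈ X, if π e.1 = τ e.2 then 1 else 0 := by
    intro X π
    apply Finset.sum_congr rfl
    intro e _
    have : (τ * π) e.1 = e.2 ↔ π e.1 = τ e.2 := by
      constructor
      · intro h; rw [← h]; simp [hτ, Equiv.Perm.mul_apply, Equiv.swap_apply_self]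
      · intro h; simp [Equiv.Perm.mul_apply, h, hτ, Equiv.swap_apply_self]
    simp only [this]
  have hCi : ∀ ρ : Equiv.Perm (Fin n), hits C ρ = (if ρ k = j then 1 else 0) + hits E ρ := by
    intro ρ
    have : C = insert (k, j) E := (Finset.insert_erase hkj).symm
    rw [hits, this, Finset.sum_insert hkjE]; rfl
  have hC'i : ∀ ρ : Equiv.Perm (Fin n), hits C' ρ = (if ρ k = j' then 1 else 0) + hits E ρ := by
    intro ρ
    rw [hits, hC', Finset.sum_insert hkj'E]; rfl
  have key : ∀ π : Equiv.Perm (Fin n),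
      min (hits C' π) s + min (hits C' (τ * π)) s
        ≤ min (hits C π) s + min (hits C (τ * π)) s := by
    intro π
    have hτk : (τ * π) k = j ↔ π k = j' := by
      constructor
      · intro h
        have : π k = τ j := by rw [← h]; simp [Equiv.Perm.mul_apply, hτ, Equiv.swap_apply_self]
        rwa [hτ, Equiv.swap_apply_left] at this
      · intro h; simp [Equiv.Perm.mul_apply, h, hτ, Equiv.swap_apply_right]
    have hτk' : (τ * π) k = j' ↔ π k = j := by
      constructor
      · intro h
        have : π k = τ j' := by rw [← h]; simp [Equiv.Perm.mul_apply, hτ, Equiv.swap_apply_self]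
        rwa [hτ, Equiv.swap_apply_right] at this
      · intro h; simp [Equiv.Perm.mul_apply, h, hτ, Equiv.swap_apply_left]
    set w : ℕ := ∑ e ∈ E.filter fun e => ¬ e.2 = j, if π e.1 = e.2 then 1 else 0 with hw
    set u : ℕ := if (π⁻¹ j, j) ∈ E then 1 else 0 with hu
    set u' : ℕ := if (π⁻¹ j', j) ∈ E then 1 else 0 with hu'
    have hwsame : (∑ e ∈ E.filter fun e => ¬ e.2 = j, if π e.1 = τ e.2 then 1 else 0) = w := by
      apply Finset.sum_congr rfl
      rintro ⟨e1, e2⟩ he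
      simp only [Finset.mem_filter] at he
      have h1 : e2 ≠ j := he.2
      have h2 : e2 ≠ j' := by
        rintro rfl; exact hcol e1 (Finset.mem_of_mem_erase he.1)
      rw [hτ, Equiv.swap_apply_of_ne_of_ne h1 h2]
    have hEπ : hits E π = u + w := by
      rw [hits, ← Finset.sum_filter_add_sum_filter_not E (fun e => e.2 = j)]
      have : (∑ e ∈ E.filter fun e => e.2 = j, if π e.1 = e.2 then 1 else 0)
          = ∑ e ∈ E.filter fun e => e.2 = j, if π e.1 = j then 1 else 0 := by
        apply Finset.sum_congr rfl
        rintro ⟨e1, e2⟩ he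
        simp only [Finset.mem_filter] at he
        rw [he.2]
      rw [this, col_part_eq E j j π]
    have hEπτ : hits E (τ * π) = u' + w := by
      rw [htw E π, ← Finset.sum_filter_add_sum_filter_not E (fun e => e.2 = j)]
      have : (∑ e ∈ E.filter fun e => e.2 = j, if π e.1 = τ e.2 then 1 else 0)
          = ∑ e ∈ E.filter fun e => e.2 = j, if π e.1 = j' then 1 else 0 := by
        apply Finset.sum_congr rfl
        rintro ⟨e1, e2⟩ he
        simp only [Finset.mem_filter] at he
        rw [he.2, hτ, Equiv.swap_apply_left]
      rw [this, col_part_eq E j j' π, hwsame]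
    have hua : u + (if π k = j then 1 else 0) ≤ 1 := by
      by_cases h : π k = j
      · have hkinv : π⁻¹ j = k := by rw [← h]; simp
        have : u = 0 := by rw [hu, hkinv]; simp [hkjE]
        simp [this, h]
      · simp only [h, if_false, add_zero, hu]
        split <;> omega
    have hua' : u' + (if π k = j' then 1 else 0) ≤ 1 := by
      by_cases h : π k = j'
      · have hkinv : π⁻¹ j' = k := by rw [← h]; simp
        have : u' = 0 := by rw [hu', hkinv]; simp [hkjE]
        simp [this, h]
      · simp only [h, if_false, add_zero, hu']
        split <;> omega
    rw [hCi, hCi, hC'i, hC'i, hEπ, hEπτ]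
    simp only [hτk, hτk']
    omega
  have reidx : ∀ X : Finset (Fin n × Fin n),
      ∑ π : Equiv.Perm (Fin n), min (hits X (τ * π)) s = Phi X s :=
    fun X => Fintype.sum_equiv (Equiv.mulLeft τ) _ _ (fun π => rfl)
  have h2 : Phi C' s + Phi C' s ≤ Phi C s + Phi C s := by
    calc Phi C' s + Phi C' s
        = ∑ π : Equiv.Perm (Fin n), (min (hits C' π) s + min (hits C' (τ * π)) s) := by
          rw [Finset.sum_add_distrib, reidx]; rfl
      _ ≤ ∑ π : Equiv.Perm (Fin n), (min (hits C π) s + min (hits C (τ * π)) s) :=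
          Finset.sum_le_sum (fun π _ => key π)
      _ = Phi C s + Phi C s := by rw [Finset.sum_add_distrib, reidx]; rfl
  omega

lemma sum_change (f g : Fin n → ℕ) (i i' : Fin n) (hne : i ≠ i')
    (hsame : ∀ k, k ≠ i → k ≠ i' → f k = g k) :
    (∑ k, g k) + f i + f i' = (∑ k, f k) + g i + g i' := by
  have hsub : ({i, i'} : Finset (Fin n)) ⊆ univ := Finset.subset_univ _
  have hpf : ∑ k ∈ ({i, i'} : Finset (Fin n)), f k = f i + f i' := Finset.sum_pair hne
  have hpg : ∑ k ∈ ({i, i'} : Finset (Fin n)), g k = g i + g i' := Finset.sum_pair hne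
  have hf := Finset.sum_sdiff (f := f) hsub
  have hg := Finset.sum_sdiff (f := g) hsub
  have hcong : ∑ k ∈ univ \ {i, i'}, f k = ∑ k ∈ univ \ {i, i'}, g k := by
    apply Finset.sum_congr rfl
    intro k hk
    simp only [Finset.mem_sdiff, Finset.mem_insert, Finset.mem_singleton] at hk
    exact hsame k (fun h => hk.2 (Or.inl h)) (fun h => hk.2 (Or.inr h))
  omega

lemma rc_zero_iff (C : Finset (Fin n × Fin n)) (i : Fin n) :
    rc C i = 0 ↔ ∀ y, (i, y) ∉ C := by
  rw [rc, Finset.card_eq_zero, Finset.eq_empty_iff_forall_notMem]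
  constructor
  · intro h y hy; exact h (i, y) (Finset.mem_filter.mpr ⟨hy, rfl⟩)
  · rintro h ⟨e1, e2⟩ he
    rw [Finset.mem_filter] at he
    obtain ⟨hm, rfl⟩ : _ ∧ e1 = i := he
    exact h e2 hm

lemma cc_zero_iff (C : Finset (Fin n × Fin n)) (j : Fin n) :
    cc C j = 0 ↔ ∀ y, (y, j) ∉ C := by
  rw [cc, Finset.card_eq_zero, Finset.eq_empty_iff_forall_notMem]
  constructor
  · intro h y hy; exact h (y, j) (Finset.mem_filter.mpr ⟨hy, rfl⟩)
  · rintro h ⟨e1, e2⟩ he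
    rw [Finset.mem_filter] at he
    obtain ⟨hm, rfl⟩ : _ ∧ e2 = j := he
    exact h e1 hm

lemma row_move (C : Finset (Fin n × Fin n)) (i i' b : Fin n)
    (hib : (i, b) ∈ C) (h2 : 2 ≤ rc C i) (h0 : rc C i' = 0) :
    mu (insert (i', b) (C.erase (i, b))) < mu C
      ∧ (insert (i', b) (C.erase (i, b))).card = C.card := by
  have hii' : i ≠ i' := by rintro rfl; omega
  have hi'bC : (i', b) ∉ C := (rc_zero_iff C i').mp h0 b
  have hi'bE : (i', b) ∉ C.erase (i, b) := fun h => hi'bC (Finset.mem_of_mem_erase h)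
  have hcard : (insert (i', b) (C.erase (i, b))).card = C.card := by
    rw [Finset.card_insert_of_notMem hi'bE, Finset.card_erase_of_mem hib]
    have : 1 ≤ C.card := Finset.card_pos.mpr ⟨_, hib⟩
    omega
  refine ⟨?_, hcard⟩
  have hrci : rc (insert (i', b) (C.erase (i, b))) i = rc C i - 1 := by
    rw [rc, rc, Finset.filter_insert, if_neg (show ¬((i', b).1 = i) from fun h => hii' h.symm),
      Finset.filter_erase, Finset.card_erase_of_mem
        (show (i, b) ∈ C.filter (fun e => e.1 = i) from Finset.mem_filter.mpr ⟨hib, rfl⟩)]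
  have hrci' : rc (insert (i', b) (C.erase (i, b))) i' = 1 := by
    rw [rc, Finset.filter_insert, if_pos rfl]
    have hempty : (C.erase (i, b)).filter (fun e => e.1 = i') = ∅ := by
      rw [Finset.filter_erase]
      have h1 : C.filter (fun e => e.1 = i') = ∅ := Finset.card_eq_zero.mp h0
      rw [h1, Finset.erase_empty]
    rw [hempty]
    simp
  have hrck : ∀ k, k ≠ i → k ≠ i' → rc C k = rc (insert (i', b) (C.erase (i, b))) k := by
    intro k hki hki'
    rw [rc, rc, Finset.filter_insert, if_neg (show ¬((i', b).1 = k) from fun h => hki' h.symm),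
      Finset.filter_erase, Finset.erase_eq_of_notMem
        (show (i, b) ∉ C.filter (fun e => e.1 = k) from
          fun h => hki ((Finset.mem_filter.mp h).2.symm))]
  have hcc : ∀ m, cc (insert (i', b) (C.erase (i, b))) m = cc C m := by
    intro m
    by_cases hm : b = m
    · subst hm
      rw [cc, cc, Finset.filter_insert, if_pos rfl, Finset.filter_erase,
        Finset.card_insert_of_notMem
          (fun h => hi'bC (Finset.mem_filter.mp (Finset.mem_of_mem_erase h)).1),
        Finset.card_erase_of_mem
          (show (i, b) ∈ C.filter (fun e => e.2 = b) from Finset.mem_filter.mpr ⟨hib, rfl⟩)]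
      have h1 : 1 ≤ #(C.filter fun e => e.2 = b) :=
        Finset.card_pos.mpr ⟨(i, b), Finset.mem_filter.mpr ⟨hib, rfl⟩⟩
      omega
    · rw [cc, cc, Finset.filter_insert, if_neg (show ¬((i', b).2 = m) from fun h => hm h),
        Finset.filter_erase, Finset.erase_eq_of_notMem
          (show (i, b) ∉ C.filter (fun e => e.2 = m) from
            fun h => hm ((Finset.mem_filter.mp h).2))]
  have hcceq : (∑ j, (cc (insert (i', b) (C.erase (i, b))) j - 1)) = ∑ j, (cc C j - 1) :=
    Finset.sum_congr rfl (fun j _ => by rw [hcc])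
  have hkey : (∑ k, (rc (insert (i', b) (C.erase (i, b))) k - 1)) + (rc C i - 1) + (rc C i' - 1)
      = (∑ k, (rc C k - 1)) + (rc (insert (i', b) (C.erase (i, b))) i - 1)
        + (rc (insert (i', b) (C.erase (i, b))) i' - 1) := by
    simpa using sum_change (fun k => rc C k - 1)
      (fun k => rc (insert (i', b) (C.erase (i, b))) k - 1) i i' hii'
      (fun k h1 h2 => by simp only [hrck k h1 h2])
  rw [mu, mu, hcceq]
  rw [hrci, hrci'] at hkey
  omega

lemma col_move (C : Finset (Fin n × Fin n)) (j j' b : Fin n)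
    (hib : (b, j) ∈ C) (h2 : 2 ≤ cc C j) (h0 : cc C j' = 0) :
    mu (insert (b, j') (C.erase (b, j))) < mu C
      ∧ (insert (b, j') (C.erase (b, j))).card = C.card := by
  have hii' : j ≠ j' := by rintro rfl; omega
  have hi'bC : (b, j') ∉ C := (cc_zero_iff C j').mp h0 b
  have hi'bE : (b, j') ∉ C.erase (b, j) := fun h => hi'bC (Finset.mem_of_mem_erase h)
  have hcard : (insert (b, j') (C.erase (b, j))).card = C.card := by
    rw [Finset.card_insert_of_notMem hi'bE, Finset.card_erase_of_mem hib]
    have : 1 ≤ C.card := Finset.card_pos.mpr ⟨_, hib⟩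
    omega
  refine ⟨?_, hcard⟩
  have hrci : cc (insert (b, j') (C.erase (b, j))) j = cc C j - 1 := by
    rw [cc, cc, Finset.filter_insert, if_neg (show ¬((b, j').2 = j) from fun h => hii' h.symm),
      Finset.filter_erase, Finset.card_erase_of_mem
        (show (b, j) ∈ C.filter (fun e => e.2 = j) from Finset.mem_filter.mpr ⟨hib, rfl⟩)]
  have hrci' : cc (insert (b, j') (C.erase (b, j))) j' = 1 := by
    rw [cc, Finset.filter_insert, if_pos rfl]
    have hempty : (C.erase (b, j)).filter (fun e => e.2 = j') = ∅ := by
      rw [Finset.filter_erase]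
      have h1 : C.filter (fun e => e.2 = j') = ∅ := Finset.card_eq_zero.mp h0
      rw [h1, Finset.erase_empty]
    rw [hempty]
    simp
  have hrck : ∀ k, k ≠ j → k ≠ j' → cc C k = cc (insert (b, j') (C.erase (b, j))) k := by
    intro k hki hki'
    rw [cc, cc, Finset.filter_insert, if_neg (show ¬((b, j').2 = k) from fun h => hki' h.symm),
      Finset.filter_erase, Finset.erase_eq_of_notMem
        (show (b, j) ∉ C.filter (fun e => e.2 = k) from
          fun h => hki ((Finset.mem_filter.mp h).2.symm))]
  have hcc : ∀ m, rc (insert (b, j') (C.erase (b, j))) m = rc C m := by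
    intro m
    by_cases hm : b = m
    · subst hm
      rw [rc, rc, Finset.filter_insert, if_pos rfl, Finset.filter_erase,
        Finset.card_insert_of_notMem
          (fun h => hi'bC (Finset.mem_filter.mp (Finset.mem_of_mem_erase h)).1),
        Finset.card_erase_of_mem
          (show (b, j) ∈ C.filter (fun e => e.1 = b) from Finset.mem_filter.mpr ⟨hib, rfl⟩)]
      have h1 : 1 ≤ #(C.filter fun e => e.1 = b) :=
        Finset.card_pos.mpr ⟨(b, j), Finset.mem_filter.mpr ⟨hib, rfl⟩⟩
      omega
    · rw [rc, rc, Finset.filter_insert, if_neg (show ¬((b, j').1 = m) from fun h => hm h),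
        Finset.filter_erase, Finset.erase_eq_of_notMem
          (show (b, j) ∉ C.filter (fun e => e.1 = m) from
            fun h => hm ((Finset.mem_filter.mp h).2))]
  have hcceq : (∑ i, (rc (insert (b, j') (C.erase (b, j))) i - 1)) = ∑ i, (rc C i - 1) :=
    Finset.sum_congr rfl (fun i _ => by rw [hcc])
  have hkey : (∑ k, (cc (insert (b, j') (C.erase (b, j))) k - 1)) + (cc C j - 1) + (cc C j' - 1)
      = (∑ k, (cc C k - 1)) + (cc (insert (b, j') (C.erase (b, j))) j - 1)
        + (cc (insert (b, j') (C.erase (b, j))) j' - 1) := by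
    simpa using sum_change (fun k => cc C k - 1)
      (fun k => cc (insert (b, j') (C.erase (b, j))) k - 1) j j' hii'
      (fun k h1 h2 => by simp only [hrck k h1 h2])
  rw [mu, mu, hcceq]
  rw [hrci, hrci'] at hkey
  omega


lemma card_fiber (C : Finset (Fin n × Fin n)) : C.card = ∑ i, rc C i :=
  Finset.card_eq_sum_card_fiberwise (f := fun e : Fin n × Fin n => e.1) (fun e _ => Finset.mem_univ e.1)
lemma card_fiber' (C : Finset (Fin n × Fin n)) : C.card = ∑ j, cc C j :=
  Finset.card_eq_sum_card_fiberwise (f := fun e : Fin n × Fin n => e.2) (fun e _ => Finset.mem_univ e.2)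

lemma phi_perm (s : ℕ) (C : Finset (Fin n × Fin n)) (hcard : C.card = n)
    (hr : ∀ i, rc C i ≤ 1) (hc : ∀ j, cc C j ≤ 1) :
    Phi C s = Dlow n s := by
  have hsum : ∑ i, rc C i = n := by rw [← card_fiber, hcard]
  have hr1 : ∀ i, rc C i = 1 := by
    intro i
    by_contra h
    have h0 : rc C i = 0 := by have := hr i; omega
    have hlt : ∑ k, rc C k < ∑ k : Fin n, 1 := by
      apply Finset.sum_lt_sum
      · intro k _; exact hr k
      · exact ⟨i, Finset.mem_univ i, by omega⟩
    simp only [Finset.sum_const, Finset.card_univ, Fintype.card_fin, smul_eq_mul,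
      mul_one] at hlt
    omega
  have hq : ∀ i, ∃ a : Fin n × Fin n, C.filter (fun e => e.1 = i) = {a} :=
    fun i => Finset.card_eq_one.mp (hr1 i)
  choose cell hcell using hq
  have hcellmem : ∀ i, cell i ∈ C ∧ (cell i).1 = i := by
    intro i
    have : cell i ∈ C.filter (fun e => e.1 = i) := by
      rw [hcell i]; exact Finset.mem_singleton_self _
    exact Finset.mem_filter.mp this
  set q : Fin n → Fin n := fun i => (cell i).2 with hqdef
  have hcellval : ∀ i, cell i = (i, q i) :=
    fun i => Prod.ext_iff.mpr ⟨(hcellmem i).2, rfl⟩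
  have hinj : Function.Injective q := by
    intro i1 i2 h
    have m1 : (i1, q i1) ∈ C.filter (fun e => e.2 = q i1) := by
      rw [Finset.mem_filter]
      exact ⟨by rw [← hcellval i1]; exact (hcellmem i1).1, rfl⟩
    have m2 : (i2, q i2) ∈ C.filter (fun e => e.2 = q i1) := by
      rw [Finset.mem_filter]
      refine ⟨by rw [← hcellval i2]; exact (hcellmem i2).1, by rw [h]⟩
    have h12 := Finset.card_le_one.mp (hc (q i1)) _ m1 _ m2
    exact (Prod.ext_iff.mp h12).1
  have hhits : ∀ π : Equiv.Perm (Fin n), hits C π = ∑ i, if π i = q i then 1 else 0 := by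
    intro π
    rw [hits, ← Finset.sum_fiberwise_of_maps_to (g := fun e : Fin n × Fin n => e.1)
      (fun e _ => Finset.mem_univ e.1)]
    apply Finset.sum_congr rfl
    intro i _
    rw [hcell i, Finset.sum_singleton, hcellval i]
  set Q : Equiv.Perm (Fin n) := Equiv.ofBijective q ((Finite.injective_iff_bijective).mp hinj)
    with hQdef
  have hQq : ∀ i, Q i = q i := fun i => rfl
  have hmain : Dlow n s = Phi C s := by
    rw [Dlow, Phi]
    apply Fintype.sum_equiv (Equiv.mulLeft Q)
    intro σ
    have hfx : hits C (Q * σ) = fixc σ := by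
      rw [hhits, fixc]
      apply Finset.sum_congr rfl
      intro i _
      have hiff : (Q * σ) i = q i ↔ σ i = i := by
        rw [Equiv.Perm.mul_apply, ← hQq i]
        exact Q.injective.eq_iff
      simp only [hiff]
    simp only [Equiv.coe_mulLeft, hfx]
  exact hmain.symm

lemma card_pi_eq (i j k l : Fin n) :
    (univ.filter fun π : Equiv.Perm (Fin n) => π i = j).card
      = (univ.filter fun π : Equiv.Perm (Fin n) => π k = l).card := by
  apply Finset.card_bij'
    (fun π _ => Equiv.swap j l * π * Equiv.swap i k)
    (fun ρ _ => Equiv.swap j l * ρ * Equiv.swap i k)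
  · intro π hπ
    rw [Finset.mem_filter] at hπ ⊢
    refine ⟨Finset.mem_univ _, ?_⟩
    simp [Equiv.Perm.mul_apply, Equiv.swap_apply_right, hπ.2]
  · intro ρ hρ
    rw [Finset.mem_filter] at hρ ⊢
    refine ⟨Finset.mem_univ _, ?_⟩
    simp [Equiv.Perm.mul_apply, Equiv.swap_apply_left, hρ.2]
  · intro π hπ
    simp [← mul_assoc, Equiv.swap_mul_self, mul_assoc]
  · intro ρ hρ
    simp [← mul_assoc, Equiv.swap_mul_self, mul_assoc]

lemma hits_total (hn : 0 < n) (C : Finset (Fin n × Fin n)) (hcard : C.card = n) :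
    (∑ π : Equiv.Perm (Fin n), hits C π) = ∑ σ : Equiv.Perm (Fin n), fixc σ := by
  have h1 : (∑ π : Equiv.Perm (Fin n), hits C π)
      = ∑ e ∈ C, (univ.filter fun π : Equiv.Perm (Fin n) => π e.1 = e.2).card := by
    simp only [hits]
    rw [Finset.sum_comm]
    exact Finset.sum_congr rfl (fun e _ => (Finset.card_filter _ _).symm)
  have h2 : (∑ σ : Equiv.Perm (Fin n), fixc σ)
      = ∑ i : Fin n, (univ.filter fun σ : Equiv.Perm (Fin n) => σ i = i).card := by
    simp only [fixc]
    rw [Finset.sum_comm]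
    exact Finset.sum_congr rfl (fun i _ => (Finset.card_filter _ _).symm)
  rw [h1, h2]
  have h3 : ∀ e ∈ C, (univ.filter fun π : Equiv.Perm (Fin n) => π e.1 = e.2).card
      = (univ.filter fun π : Equiv.Perm (Fin n) => π ⟨0, hn⟩ = ⟨0, hn⟩).card :=
    fun e _ => card_pi_eq e.1 e.2 ⟨0, hn⟩ ⟨0, hn⟩
  have h4 : ∀ i ∈ (univ : Finset (Fin n)),
      (univ.filter fun σ : Equiv.Perm (Fin n) => σ i = i).card
      = (univ.filter fun π : Equiv.Perm (Fin n) => π ⟨0, hn⟩ = ⟨0, hn⟩).card :=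
    fun i _ => card_pi_eq i i ⟨0, hn⟩ ⟨0, hn⟩
  rw [Finset.sum_congr rfl h3, Finset.sum_congr rfl h4, Finset.sum_const, Finset.sum_const,
    hcard, Finset.card_univ, Fintype.card_fin]

lemma phi_ge (s : ℕ) : ∀ (N : ℕ) (C : Finset (Fin n × Fin n)), mu C = N → C.card = n →
    Dlow n s ≤ Phi C s := by
  intro N
  induction N using Nat.strong_induction_on with
  | _ N ih =>
    intro C hmu hcard
    by_cases hterm : (∀ i, rc C i ≤ 1) ∧ (∀ j, cc C j ≤ 1)
    · exact le_of_eq (phi_perm s C hcard hterm.1 hterm.2).symm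
    · rw [not_and_or] at hterm
      rcases hterm with hrow | hcol
      · push_neg at hrow
        obtain ⟨i, hi⟩ := hrow
        have h2 : 2 ≤ rc C i := by omega
        obtain ⟨⟨e1, b⟩, he⟩ := Finset.card_pos.mp (show 0 < rc C i by omega)
        rw [Finset.mem_filter] at he
        have hib : (i, b) ∈ C := by
          have heq : ((e1, b) : Fin n × Fin n) = (i, b) := Prod.ext_iff.mpr ⟨he.2, rfl⟩
          rw [← heq]; exact he.1
        have h0 : ∃ i', rc C i' = 0 := by
          by_contra hno
          push_neg at hno
          have hall : ∀ k ∈ (univ : Finset (Fin n)), 1 ≤ rc C k :=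
            fun k _ => by have := hno k; omega
          have hlt : ∑ k : Fin n, 1 < ∑ k, rc C k :=
            Finset.sum_lt_sum hall ⟨i, Finset.mem_univ i, by omega⟩
          simp only [Finset.sum_const, Finset.card_univ, Fintype.card_fin, smul_eq_mul,
            mul_one] at hlt
          rw [← card_fiber, hcard] at hlt
          omega
        obtain ⟨i', h0⟩ := h0
        have hii' : i ≠ i' := by rintro rfl; omega
        have hmove := row_move C i i' b hib h2 h0
        have hex := exchange_row s C i i' b hib hii' ((rc_zero_iff C i').mp h0)
        have hrec := ih (mu (insert (i', b) (C.erase (i, b)))) (by omega)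
          (insert (i', b) (C.erase (i, b))) rfl (by rw [hmove.2, hcard])
        exact le_trans hrec hex
      · push_neg at hcol
        obtain ⟨j, hj⟩ := hcol
        have h2 : 2 ≤ cc C j := by omega
        obtain ⟨⟨b, e2⟩, he⟩ := Finset.card_pos.mp (show 0 < cc C j by omega)
        rw [Finset.mem_filter] at he
        have hib : (b, j) ∈ C := by
          have heq : ((b, e2) : Fin n × Fin n) = (b, j) := Prod.ext_iff.mpr ⟨rfl, he.2⟩
          rw [← heq]; exact he.1
        have h0 : ∃ j', cc C j' = 0 := by
          by_contra hno
          push_neg at hno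
          have hall : ∀ k ∈ (univ : Finset (Fin n)), 1 ≤ cc C k :=
            fun k _ => by have := hno k; omega
          have hlt : ∑ k : Fin n, 1 < ∑ k, cc C k :=
            Finset.sum_lt_sum hall ⟨j, Finset.mem_univ j, by omega⟩
          simp only [Finset.sum_const, Finset.card_univ, Fintype.card_fin, smul_eq_mul,
            mul_one] at hlt
          rw [← card_fiber', hcard] at hlt
          omega
        obtain ⟨j', h0⟩ := h0
        have hjj' : j ≠ j' := by rintro rfl; omega
        have hmove := col_move C j j' b hib h2 h0
        have hex := exchange_col s C b j j' hib hjj' ((cc_zero_iff C j').mp h0)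
        have hrec := ih (mu (insert (b, j') (C.erase (b, j)))) (by omega)
          (insert (b, j') (C.erase (b, j))) rfl (by rw [hmove.2, hcard])
        exact le_trans hrec hex

lemma exists_top {ι : Type*} [Fintype ι] (f : ι → ℕ) :
    ∀ m, m ≤ Fintype.card ι →
      ∃ S : Finset ι, S.card = m ∧ ∀ a ∈ S, ∀ b, b ∉ S → f b ≤ f a := by
  intro m
  induction m with
  | zero => exact fun _ => ⟨∅, rfl, by simp⟩
  | succ m ih =>
    intro hm
    obtain ⟨S, hScard, hStop⟩ := ih (by omega)
    have hne : (univ \ S).Nonempty := by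
      rw [← Finset.card_pos, Finset.card_sdiff_of_subset (Finset.subset_univ S), Finset.card_univ, hScard]
      omega
    obtain ⟨b0, hb0mem, hb0max⟩ := Finset.exists_max_image (univ \ S) f hne
    have hb0S : b0 ∉ S := (Finset.mem_sdiff.mp hb0mem).2
    refine ⟨insert b0 S, by rw [Finset.card_insert_of_notMem hb0S, hScard], ?_⟩
    intro a ha b hb
    rw [Finset.mem_insert] at ha
    have hbS : b ∉ S := fun h => hb (Finset.mem_insert_of_mem h)
    rcases ha with rfl | haS
    · exact hb0max b (Finset.mem_sdiff.mpr ⟨Finset.mem_univ b, hbS⟩)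
    · exact hStop a haS b hbS

lemma hits_le_topfix (hn : 0 < n) (m : ℕ) (C0 : Finset (Fin n × Fin n)) (hC0 : C0.card = n)
    (S : Finset (Equiv.Perm (Fin n))) (hS : S.card = m)
    (Sstar : Finset (Equiv.Perm (Fin n))) (hSs : Sstar.card = m)
    (htop : ∀ a ∈ Sstar, ∀ b, b ∉ Sstar → fixc b ≤ fixc a) (hmne : Sstar.Nonempty) :
    ∑ π ∈ S, hits C0 π ≤ ∑ σ ∈ Sstar, fixc σ := by
  obtain ⟨σ0, hσ0, hσmin⟩ := Finset.exists_min_image Sstar fixc hmne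
  set s := fixc σ0 with hs
  have hout : ∀ σ, σ ∉ Sstar → fixc σ ≤ s := fun σ h => htop σ0 hσ0 σ h
  have h1 : ∑ π ∈ S, hits C0 π ≤ m * s + ∑ π ∈ S, (hits C0 π - s) := by
    calc ∑ π ∈ S, hits C0 π ≤ ∑ π ∈ S, (s + (hits C0 π - s)) :=
          Finset.sum_le_sum (fun π _ => by omega)
      _ = m * s + ∑ π ∈ S, (hits C0 π - s) := by
          rw [Finset.sum_add_distrib, Finset.sum_const, hS, smul_eq_mul]
  have h2 : ∑ π ∈ S, (hits C0 π - s) ≤ ∑ π : Equiv.Perm (Fin n), (hits C0 π - s) :=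
    Finset.sum_le_sum_of_subset (Finset.subset_univ S)
  have h3 : (∑ π : Equiv.Perm (Fin n), (hits C0 π - s)) + Phi C0 s
      = ∑ π : Equiv.Perm (Fin n), hits C0 π := by
    rw [Phi, ← Finset.sum_add_distrib]
    exact Finset.sum_congr rfl (fun π _ => by omega)
  have h4 : (∑ σ : Equiv.Perm (Fin n), (fixc σ - s)) + Dlow n s
      = ∑ σ : Equiv.Perm (Fin n), fixc σ := by
    rw [Dlow, ← Finset.sum_add_distrib]
    exact Finset.sum_congr rfl (fun σ _ => by omega)
  have h5 : Dlow n s ≤ Phi C0 s := phi_ge s (mu C0) C0 rfl hC0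
  have h6 := hits_total hn C0 hC0
  have h7 : (∑ π : Equiv.Perm (Fin n), (hits C0 π - s))
      ≤ ∑ σ : Equiv.Perm (Fin n), (fixc σ - s) := by omega
  have h8 : (∑ σ : Equiv.Perm (Fin n), (fixc σ - s)) = ∑ σ ∈ Sstar, (fixc σ - s) :=
    (Finset.sum_subset (Finset.subset_univ Sstar)
      (fun σ _ hσ => by have := hout σ hσ; omega)).symm
  have h9 : m * s + ∑ σ ∈ Sstar, (fixc σ - s) = ∑ σ ∈ Sstar, fixc σ := by
    have hcg : ∀ σ ∈ Sstar, s + (fixc σ - s) = fixc σ :=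
      fun σ hσ => by have := hσmin σ hσ; omega
    rw [← Finset.sum_congr rfl hcg, Finset.sum_add_distrib, Finset.sum_const, hSs, smul_eq_mul]
  calc ∑ π ∈ S, hits C0 π ≤ m * s + ∑ π ∈ S, (hits C0 π - s) := h1
    _ ≤ m * s + ∑ σ ∈ Sstar, (fixc σ - s) := by
        exact Nat.add_le_add_left (le_trans h2 (le_trans h7 (le_of_eq h8))) _
    _ = ∑ σ ∈ Sstar, fixc σ := h9

lemma sumLargest_ge {ι : Type*} [Fintype ι] (v : ι → ℝ) (m : ℕ) (I : Finset ι)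
    (hI : I.card = m) : ∑ i ∈ I, v i ≤ sumLargest v m := by
  apply le_csSup
  · exact Set.Finite.bddAbove (Set.Finite.image _ (Set.toFinite _))
  · exact ⟨I, hI, rfl⟩

lemma sumLargest_attained {ι : Type*} [Fintype ι] (v : ι → ℝ) (m : ℕ)
    (hm : m ≤ Fintype.card ι) :
    ∃ I : Finset ι, I.card = m ∧ sumLargest v m = ∑ i ∈ I, v i := by
  have hfin : ((fun I : Finset ι => ∑ i ∈ I, v i) '' {I | I.card = m}).Finite :=
    Set.Finite.image _ (Set.toFinite _)
  have hne : ((fun I : Finset ι => ∑ i ∈ I, v i) '' {I | I.card = m}).Nonempty := by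
    obtain ⟨t, -, ht⟩ := Finset.exists_subset_card_eq
      (show m ≤ (univ : Finset ι).card by rwa [Finset.card_univ])
    exact ⟨_, ⟨t, ht, rfl⟩⟩
  have hmem := Set.Nonempty.csSup_mem hne hfin
  rw [Set.mem_image] at hmem
  obtain ⟨I, hIcard, hIeq⟩ := hmem
  exact ⟨I, hIcard, hIeq.symm⟩

lemma stepA (x : Fin n → Fin n → ℝ) (S : Finset (Equiv.Perm (Fin n))) :
    ∑ π ∈ S, T n x π
      = ∑ e : Fin n × Fin n, ((S.filter (fun π => π e.1 = e.2)).card : ℝ) * x e.1 e.2 := by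
  simp only [T]
  rw [Finset.sum_comm, Fintype.sum_prod_type]
  apply Finset.sum_congr rfl
  intro k _
  have hx : ∀ π ∈ S, x k (π k) = ∑ l : Fin n, if π k = l then x k l else 0 := by
    intro π _
    rw [Finset.sum_ite_eq univ (π k) (x k)]
    simp
  rw [Finset.sum_congr rfl hx, Finset.sum_comm]
  apply Finset.sum_congr rfl
  intro l _
  rw [← Finset.sum_filter, Finset.sum_const, nsmul_eq_mul]

lemma stepC (x : Fin n → Fin n → ℝ) (h0 : ∀ i j, 0 ≤ x i j) (h1 : ∀ i j, x i j ≤ 1)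
    (hsum : ∑ i, ∑ j, x i j ≤ (n : ℝ)) (c : Fin n × Fin n → ℕ)
    (C0 : Finset (Fin n × Fin n)) (hC0card : C0.card = n)
    (htop : ∀ a ∈ C0, ∀ b, b ∉ C0 → c b ≤ c a) (hne : C0.Nonempty) :
    ∑ e : Fin n × Fin n, (c e : ℝ) * x e.1 e.2 ≤ ∑ e ∈ C0, (c e : ℝ) := by
  obtain ⟨e0, he0, hmin⟩ := Finset.exists_min_image C0 c hne
  set θ : ℝ := (c e0 : ℝ) with hθ
  have hθ0 : 0 ≤ θ := by positivity
  have hout : ∀ e ∈ univ \ C0, (c e : ℝ) ≤ θ := by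
    intro e he
    exact Nat.cast_le.mpr (htop e0 he0 e (Finset.mem_sdiff.mp he).2)
  have hin : ∀ e ∈ C0, θ ≤ (c e : ℝ) := fun e he => Nat.cast_le.mpr (hmin e he)
  have hb1 : ∑ e ∈ univ \ C0, (c e : ℝ) * x e.1 e.2 ≤ ∑ e ∈ univ \ C0, θ * x e.1 e.2 :=
    Finset.sum_le_sum (fun e he => mul_le_mul_of_nonneg_right (hout e he) (h0 e.1 e.2))
  have hb2 : ∑ e ∈ C0, (c e : ℝ) * x e.1 e.2
      ≤ ∑ e ∈ C0, (((c e : ℝ) - θ) + θ * x e.1 e.2) :=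
    Finset.sum_le_sum (fun e he => by nlinarith [h0 e.1 e.2, h1 e.1 e.2, hin e he])
  have hsplit : (∑ e ∈ univ \ C0, (c e : ℝ) * x e.1 e.2)
      + ∑ e ∈ C0, (c e : ℝ) * x e.1 e.2
      = ∑ e : Fin n × Fin n, (c e : ℝ) * x e.1 e.2 :=
    Finset.sum_sdiff (Finset.subset_univ C0)
  have hxsplit : (∑ e ∈ univ \ C0, θ * x e.1 e.2) + ∑ e ∈ C0, θ * x e.1 e.2
      = ∑ e : Fin n × Fin n, θ * x e.1 e.2 :=
    Finset.sum_sdiff (Finset.subset_univ C0)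
  have hxall : ∑ e : Fin n × Fin n, θ * x e.1 e.2 ≤ θ * n := by
    rw [← Finset.mul_sum]
    apply mul_le_mul_of_nonneg_left _ hθ0
    rw [Fintype.sum_prod_type]
    exact hsum
  have hsub : ∑ e ∈ C0, ((c e : ℝ) - θ) = (∑ e ∈ C0, (c e : ℝ)) - n * θ := by
    rw [Finset.sum_sub_distrib, Finset.sum_const, hC0card, nsmul_eq_mul]
  have hsum2 : ∑ e ∈ C0, (((c e : ℝ) - θ) + θ * x e.1 e.2)
      = (∑ e ∈ C0, ((c e : ℝ) - θ)) + ∑ e ∈ C0, θ * x e.1 e.2 := Finset.sum_add_distrib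
  linarith [hb1, hb2, hsplit, hxsplit, hxall, hsub, hsum2]

lemma stepD (C0 : Finset (Fin n × Fin n)) (S : Finset (Equiv.Perm (Fin n))) :
    ∑ e ∈ C0, (S.filter (fun π => π e.1 = e.2)).card = ∑ π ∈ S, hits C0 π := by
  simp only [hits]
  rw [Finset.sum_comm]
  exact Finset.sum_congr rfl (fun e _ => Finset.card_filter _ _)

end L4

theorem lemma4 (n : ℕ) (x : Fin n → Fin n → ℝ)
    (h0 : ∀ i j, 0 ≤ x i j) (h1 : ∀ i j, x i j ≤ 1)
    (hsum : ∑ i, ∑ j, x i j ≤ (n : ℝ)) :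
    Maj (T n x) (T n (fun i j => if i = j then (1 : ℝ) else 0)) := by
  intro m hm1 hm2
  rcases Nat.eq_zero_or_pos n with hn | hn
  · subst hn
    have hT : T 0 x = T 0 (fun i j => if i = j then (1 : ℝ) else 0) := by
      funext π
      simp [T]
    rw [hT]
  · obtain ⟨S, hScard, hSeq⟩ := L4.sumLargest_attained (T n x) m hm2
    rw [hSeq]
    set c : Fin n × Fin n → ℕ := fun e => (S.filter (fun π => π e.1 = e.2)).card with hcdef
    have hA := L4.stepA x S
    have hcprod : n ≤ Fintype.card (Fin n × Fin n) := by
      rw [Fintype.card_prod, Fintype.card_fin]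
      nlinarith
    obtain ⟨C0, hC0card, hC0top⟩ := L4.exists_top c n hcprod
    have hC0ne : C0.Nonempty := Finset.card_pos.mp (by omega)
    have hC := L4.stepC x h0 h1 hsum c C0 hC0card hC0top hC0ne
    obtain ⟨Sstar, hSsCard, hSsTop⟩ := L4.exists_top (L4.fixc (n := n)) m hm2
    have hSsne : Sstar.Nonempty := Finset.card_pos.mp (by omega)
    have hF := L4.hits_le_topfix hn m C0 hC0card S hScard Sstar hSsCard hSsTop hSsne
    have hDnat : ∑ e ∈ C0, c e = ∑ π ∈ S, L4.hits C0 π := L4.stepD C0 S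
    have hD : (∑ e ∈ C0, (c e : ℝ)) = ((∑ π ∈ S, L4.hits C0 π : ℕ) : ℝ) := by
      exact_mod_cast congrArg (Nat.cast : ℕ → ℝ) hDnat
    have hG : ((∑ σ ∈ Sstar, L4.fixc σ : ℕ) : ℝ)
        ≤ sumLargest (T n (fun i j => if i = j then (1 : ℝ) else 0)) m := by
      have hTg : ∑ σ ∈ Sstar, T n (fun i j => if i = j then (1 : ℝ) else 0) σ
          = ((∑ σ ∈ Sstar, L4.fixc σ : ℕ) : ℝ) := by
        push_cast
        apply Finset.sum_congr rfl
        intro σ _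
        simp only [T, L4.fixc]
        push_cast
        apply Finset.sum_congr rfl
        intro k _
        by_cases h : σ k = k
        · simp [h]
        · have h' : ¬ k = σ k := fun hh => h hh.symm
          simp [h, h']
      rw [← hTg]
      exact L4.sumLargest_ge _ m Sstar hSsCard
    calc ∑ π ∈ S, T n x π
        = ∑ e : Fin n × Fin n, (c e : ℝ) * x e.1 e.2 := hA
      _ ≤ ∑ e ∈ C0, (c e : ℝ) := hC
      _ = ((∑ π ∈ S, L4.hits C0 π : ℕ) : ℝ) := hD
      _ ≤ ((∑ σ ∈ Sstar, L4.fixc σ : ℕ) : ℝ) := Nat.cast_le.mpr hF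
      _ ≤ _ := hG
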